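/- Let G be an s-step nilpotent group and H a subgroup of G × G. Suppose there exist distinct positive integers p, q and normal subgroups G¹, …, G^d of G such that (i) G = G¹ ⋯ G^d, and (ii) {(g₁^p g₂^{p²} ⋯ g_d^{p^d}, g₁^q g₂^{q²} ⋯ g_d^{q^d}) : g₁ ∈ G¹, …, g_d ∈ G^d} ⊆ H · (G₂ × G₂), where G₂ = [G,G]. Then the set U := {g ∈ G_s : (g^{p^j}, g^{q^j}) ∈ H for some j ≥ 1} generates G_s, where G_s is the s-th term of the lower central series of G. -/

import Mathlib

open Subgroup
open scoped commutatorElement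

namespace Stmt9Aux

variable {K : Type*} [Group K]




/-- iterated left-nested commutator -/
def itc (x : K) (l : List K) : K := l.foldl (fun a b => ⁅a, b⁆) x

@[simp] lemma itc_nil (x : K) : itc x [] = x := rfl
@[simp] lemma itc_cons (x y : K) (l : List K) : itc x (y :: l) = itc ⁅x, y⁆ l := rfl

lemma itc_append_singleton (x : K) (l : List K) (y : K) :
    itc x (l ++ [y]) = ⁅itc x l, y⁆ := by
  simp [itc, List.foldl_append]

lemma itc_mem_lcs (n : ℕ) (x : K) (hx : x ∈ (⊤ : Subgroup K).lowerCentralSeries n) (l : List K) :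
    itc x l ∈ (⊤ : Subgroup K).lowerCentralSeries (n + l.length) := by
  induction l generalizing x n with
  | nil => simpa using hx
  | cons y l ih =>
    have h : ⁅x, y⁆ ∈ (⊤ : Subgroup K).lowerCentralSeries (n + 1) :=
      commutator_mem_commutator hx (mem_top y)
    have h2 := ih (n + 1) ⁅x, y⁆ h
    have harith : n + 1 + l.length = n + (y :: l).length := by simp; omega
    rwa [harith] at h2

lemma itc_mem_subgroup (S : Subgroup K) (x : K) (hx : x ∈ S) (l : List K)
    (hl : ∀ y ∈ l, y ∈ S) : itc x l ∈ S := by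
  induction l generalizing x with
  | nil => simpa using hx
  | cons y l ih =>
    have hy : y ∈ S := hl y (by simp)
    have : ⁅x, y⁆ ∈ S := by
      rw [commutatorElement_def]
      exact mul_mem (mul_mem (mul_mem hx hy) (inv_mem hx)) (inv_mem hy)
    exact ih ⁅x, y⁆ this (fun z hz => hl z (by simp [hz]))

lemma itc_map {K' : Type*} [Group K'] (f : K →* K') (x : K) (l : List K) :
    f (itc x l) = itc (f x) (l.map f) := by
  induction l generalizing x with
  | nil => rfl
  | cons y l ih => simp [itc_cons, ih, map_commutatorElement]

lemma comm_lcs : ∀ (n m : ℕ),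
    ⁅(⊤ : Subgroup K).lowerCentralSeries m, (⊤ : Subgroup K).lowerCentralSeries n⁆ ≤ (⊤ : Subgroup K).lowerCentralSeries (m + n + 1) := by
  intro n
  induction n with
  | zero =>
    intro m
    rw [Subgroup.lowerCentralSeries_zero]
    exact le_of_eq rfl
  | succ n ih =>
    intro m
    set N := (⊤ : Subgroup K).lowerCentralSeries (m + n + 2) with hN
    have harith : m + (n + 1) + 1 = m + n + 2 := by omega
    rw [harith]
    have key : ⁅⁅(⊤ : Subgroup K).lowerCentralSeries n, (⊤ : Subgroup K)⁆, (⊤ : Subgroup K).lowerCentralSeries m⁆ ≤ N := by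
      have h1 : ⁅⁅(⊤ : Subgroup K).map (QuotientGroup.mk' N),
            ((⊤ : Subgroup K).lowerCentralSeries m).map (QuotientGroup.mk' N)⁆,
            ((⊤ : Subgroup K).lowerCentralSeries n).map (QuotientGroup.mk' N)⁆ = ⊥ := by
        rw [← map_commutator, ← map_commutator, Subgroup.map_eq_bot_iff, QuotientGroup.ker_mk']
        have : ⁅(⊤ : Subgroup K), (⊤ : Subgroup K).lowerCentralSeries m⁆ = (⊤ : Subgroup K).lowerCentralSeries (m + 1) := by
          rw [commutator_comm]; rfl
        rw [this]
        have := ih (m + 1)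
        calc ⁅(⊤ : Subgroup K).lowerCentralSeries (m+1), (⊤ : Subgroup K).lowerCentralSeries n⁆
            ≤ (⊤ : Subgroup K).lowerCentralSeries (m + 1 + n + 1) := ih (m+1)
          _ = N := by rw [hN]; congr 1; omega
      have h2 : ⁅⁅((⊤ : Subgroup K).lowerCentralSeries m).map (QuotientGroup.mk' N),
            ((⊤ : Subgroup K).lowerCentralSeries n).map (QuotientGroup.mk' N)⁆,
            (⊤ : Subgroup K).map (QuotientGroup.mk' N)⁆ = ⊥ := by
        rw [← map_commutator, ← map_commutator, Subgroup.map_eq_bot_iff, QuotientGroup.ker_mk']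
        calc ⁅⁅(⊤ : Subgroup K).lowerCentralSeries m, (⊤ : Subgroup K).lowerCentralSeries n⁆, ⊤⁆
            ≤ ⁅(⊤ : Subgroup K).lowerCentralSeries (m + n + 1), ⊤⁆ :=
              commutator_mono (ih m) le_rfl
          _ = (⊤ : Subgroup K).lowerCentralSeries (m + n + 2) := rfl
      have h3 := commutator_commutator_eq_bot_of_rotate h1 h2
      rw [← map_commutator, ← map_commutator, Subgroup.map_eq_bot_iff,
        QuotientGroup.ker_mk'] at h3
      exact h3
    calc ⁅(⊤ : Subgroup K).lowerCentralSeries m, (⊤ : Subgroup K).lowerCentralSeries (n+1)⁆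
        = ⁅(⊤ : Subgroup K).lowerCentralSeries (n+1), (⊤ : Subgroup K).lowerCentralSeries m⁆ := commutator_comm _ _
      _ = ⁅⁅(⊤ : Subgroup K).lowerCentralSeries n, ⊤⁆, (⊤ : Subgroup K).lowerCentralSeries m⁆ := rfl
      _ ≤ N := key


lemma central_mod (n : ℕ) (z : K) (hz : z ∈ (⊤ : Subgroup K).lowerCentralSeries (n+1))
    (q : K ⧸ (⊤ : Subgroup K).lowerCentralSeries (n+2)) :
    Commute (↑z : K ⧸ (⊤ : Subgroup K).lowerCentralSeries (n+2)) q := by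
  induction q using QuotientGroup.induction_on with
  | H w =>
    show (↑z : K ⧸ (⊤ : Subgroup K).lowerCentralSeries (n+2)) * ↑w = ↑w * ↑z
    rw [← QuotientGroup.mk_mul, ← QuotientGroup.mk_mul, QuotientGroup.eq]
    have hid : (z * w)⁻¹ * (w * z) = ⁅w⁻¹, z⁻¹⁆ := by group
    rw [hid]
    have : ⁅w⁻¹, z⁻¹⁆ ∈ ⁅(⊤ : Subgroup K), (⊤ : Subgroup K).lowerCentralSeries (n+1)⁆ :=
      commutator_mem_commutator (mem_top _) (inv_mem hz)
    have hle : ⁅(⊤ : Subgroup K), (⊤ : Subgroup K).lowerCentralSeries (n+1)⁆ ≤ (⊤ : Subgroup K).lowerCentralSeries (n+2) := by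
      rw [commutator_comm]
      exact le_of_eq rfl
    exact hle this

lemma mk_one_of_mem {N : Subgroup K} [N.Normal] {z : K} (hz : z ∈ N) :
    (↑z : K ⧸ N) = 1 := (QuotientGroup.eq_one_iff z).mpr hz

lemma comm_mem_succ {n : ℕ} {x : K} (hx : x ∈ (⊤ : Subgroup K).lowerCentralSeries n) (y : K) :
    ⁅x, y⁆ ∈ (⊤ : Subgroup K).lowerCentralSeries (n+1) := commutator_mem_commutator hx (mem_top y)

lemma conj_central {M : Type*} [Group M] {c : M} (h : ∀ q, Commute c q) (a : M) :
    a * c * a⁻¹ = c := by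
  have := (h a).eq
  rw [← this]; group

lemma comm_mul_left_mod (n : ℕ) (x₁ x₂ y : K)
    (h1 : x₁ ∈ (⊤ : Subgroup K).lowerCentralSeries n) (h2 : x₂ ∈ (⊤ : Subgroup K).lowerCentralSeries n) :
    (↑⁅x₁ * x₂, y⁆ : K ⧸ (⊤ : Subgroup K).lowerCentralSeries (n+2)) = ↑⁅x₁, y⁆ * ↑⁅x₂, y⁆ := by
  have hid : ⁅x₁ * x₂, y⁆ = x₁ * ⁅x₂, y⁆ * x₁⁻¹ * ⁅x₁, y⁆ := by group
  have hc2 := central_mod n ⁅x₂, y⁆ (comm_mem_succ h2 y)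
  have hc1 := central_mod n ⁅x₁, y⁆ (comm_mem_succ h1 y)
  rw [hid, QuotientGroup.mk_mul, QuotientGroup.mk_mul, QuotientGroup.mk_mul,
    QuotientGroup.mk_inv]
  rw [conj_central hc2 _]
  exact (hc2 _).eq

lemma comm_mul_right_mod (n : ℕ) (x y₁ y₂ : K) (hx : x ∈ (⊤ : Subgroup K).lowerCentralSeries n) :
    (↑⁅x, y₁ * y₂⁆ : K ⧸ (⊤ : Subgroup K).lowerCentralSeries (n+2)) = ↑⁅x, y₁⁆ * ↑⁅x, y₂⁆ := by
  have hid : ⁅x, y₁ * y₂⁆ = ⁅x, y₁⁆ * (y₁ * ⁅x, y₂⁆ * y₁⁻¹) := by group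
  have hc2 := central_mod n ⁅x, y₂⁆ (comm_mem_succ hx y₂)
  rw [hid, QuotientGroup.mk_mul, QuotientGroup.mk_mul, QuotientGroup.mk_mul,
    QuotientGroup.mk_inv]
  congr 1
  exact conj_central hc2 _

lemma comm_inv_left_mod (n : ℕ) (x y : K) (hx : x ∈ (⊤ : Subgroup K).lowerCentralSeries n) :
    (↑⁅x⁻¹, y⁆ : K ⧸ (⊤ : Subgroup K).lowerCentralSeries (n+2)) = (↑⁅x, y⁆)⁻¹ := by
  have hid : ⁅x⁻¹, y⁆ = x⁻¹ * ⁅x, y⁆⁻¹ * x := by group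
  have hc := central_mod n ⁅x, y⁆ (comm_mem_succ hx y)
  rw [hid, QuotientGroup.mk_mul, QuotientGroup.mk_mul, QuotientGroup.mk_inv,
    QuotientGroup.mk_inv]
  have hcinv : ∀ q, Commute ((↑⁅x, y⁆ : K ⧸ (⊤ : Subgroup K).lowerCentralSeries (n+2)))⁻¹ q :=
    fun q => (hc q).inv_left
  have := conj_central hcinv ((↑x : K ⧸ (⊤ : Subgroup K).lowerCentralSeries (n+2)))⁻¹
  rw [inv_inv] at this
  exact this

lemma comm_pow_left_mod (n : ℕ) (x y : K) (hx : x ∈ (⊤ : Subgroup K).lowerCentralSeries n) (e : ℕ) :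
    (↑⁅x ^ e, y⁆ : K ⧸ (⊤ : Subgroup K).lowerCentralSeries (n+2)) = (↑⁅x, y⁆) ^ e := by
  induction e with
  | zero => simp; exact (pow_zero _).symm
  | succ e ih =>
    rw [pow_succ, comm_mul_left_mod n _ _ y (pow_mem hx e) hx, ih, pow_succ]

lemma comm_pow_right_mod (n : ℕ) (x y : K) (hx : x ∈ (⊤ : Subgroup K).lowerCentralSeries n) (e : ℕ) :
    (↑⁅x, y ^ e⁆ : K ⧸ (⊤ : Subgroup K).lowerCentralSeries (n+2)) = (↑⁅x, y⁆) ^ e := by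
  induction e with
  | zero => simp; exact (pow_zero _).symm
  | succ e ih =>
    rw [pow_succ, comm_mul_right_mod n x _ _ hx, ih, pow_succ]


/-- perturbing the entries of an iterated commutator by commutator-subgroup
elements changes the result only by a deep lower-central-series term -/
lemma itc_mod {l l' : List K}
    (hll : List.Forall₂ (fun a b => ∃ ε ∈ (⊤ : Subgroup K).lowerCentralSeries 1, b = a * ε) l l') :
    ∀ (n : ℕ) (x x' : K), x ∈ (⊤ : Subgroup K).lowerCentralSeries n →
      (∃ δ ∈ (⊤ : Subgroup K).lowerCentralSeries (n+1), x' = x * δ) →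
      ∃ δ' ∈ (⊤ : Subgroup K).lowerCentralSeries (n + l.length + 1), itc x' l' = itc x l * δ' := by
  induction hll with
  | nil =>
    intro n x x' _ hδ
    simpa using hδ
  | @cons a b l l' hab _ ih =>
    intro n x x' hx hδ
    obtain ⟨ε, hε, rfl⟩ := hab
    obtain ⟨δ, hδm, rfl⟩ := hδ
    have h1 : x * ⁅δ, a * ε⁆ * x⁻¹ ∈ (⊤ : Subgroup K).lowerCentralSeries (n+2) :=
      (Subgroup.lowerCentralSeries_normal ⊤ (n+2)).conj_mem _ (comm_mem_succ hδm (a * ε)) x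
    have h2 : ⁅x, ε⁆ ∈ (⊤ : Subgroup K).lowerCentralSeries (n+2) := by
      have hc := comm_lcs (K := K) 1 n
      have harith : n + 1 + 1 = n + 2 := by omega
      rw [harith] at hc
      exact hc (commutator_mem_commutator hx hε)
    have h2' : a * ⁅x, ε⁆ * a⁻¹ ∈ (⊤ : Subgroup K).lowerCentralSeries (n+2) :=
      (Subgroup.lowerCentralSeries_normal ⊤ (n+2)).conj_mem _ h2 a
    have h1' : ⁅x, a⁆⁻¹ * (x * ⁅δ, a * ε⁆ * x⁻¹) * ⁅x, a⁆ ∈ (⊤ : Subgroup K).lowerCentralSeries (n+2) := by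
      simpa using (Subgroup.lowerCentralSeries_normal ⊤ (n+2)).conj_mem _ h1 ⁅x, a⁆⁻¹
    have hδ₁ : ⁅x, a⁆⁻¹ * ⁅x * δ, a * ε⁆ ∈ (⊤ : Subgroup K).lowerCentralSeries (n+2) := by
      have hidall : ⁅x, a⁆⁻¹ * ⁅x * δ, a * ε⁆ =
          (⁅x, a⁆⁻¹ * (x * ⁅δ, a * ε⁆ * x⁻¹) * ⁅x, a⁆) * (a * ⁅x, ε⁆ * a⁻¹) := by
        group
      rw [hidall]
      exact mul_mem h1' h2'
    have heq : ⁅x * δ, a * ε⁆ = ⁅x, a⁆ * (⁅x, a⁆⁻¹ * ⁅x * δ, a * ε⁆) := by group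
    obtain ⟨δ', hδ'm, hδ'e⟩ := ih (n+1) ⁅x, a⁆ ⁅x * δ, a * ε⁆ (comm_mem_succ hx a)
      ⟨⁅x, a⁆⁻¹ * ⁅x * δ, a * ε⁆, hδ₁, heq⟩
    refine ⟨δ', ?_, ?_⟩
    · have harith : n + 1 + l.length + 1 = n + (a :: l).length + 1 := by simp; omega
      rwa [harith] at hδ'm
    · simpa using hδ'e

/-- raising the entries of an iterated commutator to powers raises the result to
the product of the powers, modulo a deep lower-central-series term -/
lemma itc_pow : ∀ (l : List K) (ms : List ℕ), ms.length = l.length →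
    ∀ (n : ℕ) (x : K), x ∈ (⊤ : Subgroup K).lowerCentralSeries n → ∀ (e : ℕ),
      ∃ δ ∈ (⊤ : Subgroup K).lowerCentralSeries (n + l.length + 1),
        itc (x ^ e) (List.zipWith (fun a m => a ^ m) l ms) = (itc x l) ^ (e * ms.prod) * δ := by
  intro l
  induction l with
  | nil =>
    intro ms hlen n x hx e
    have : ms = [] := List.length_eq_zero_iff.mp (by simpa using hlen)
    subst this
    exact ⟨1, one_mem _, by simp⟩
  | cons a l ihl =>
    intro ms hlen n x hx e
    match ms, hlen with
    | m :: ms', hlen =>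
    have hlen' : ms'.length = l.length := by simpa using hlen
    -- key : ⁅x^e, a^m⁆ = ⁅x,a⁆^(e*m) * δ₁
    have hkeyq : (↑⁅x ^ e, a ^ m⁆ : K ⧸ (⊤ : Subgroup K).lowerCentralSeries (n+2)) = ↑(⁅x, a⁆ ^ (e * m)) := by
      rw [comm_pow_left_mod n x (a ^ m) hx e, comm_pow_right_mod n x a hx m]
      rw [← pow_mul, mul_comm m e]
      exact (QuotientGroup.mk_pow _ ⁅x, a⁆ (e * m)).symm
    have hδ₁ : (⁅x, a⁆ ^ (e * m))⁻¹ * ⁅x ^ e, a ^ m⁆ ∈ (⊤ : Subgroup K).lowerCentralSeries (n+2) := by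
      rw [← QuotientGroup.eq]
      exact hkeyq.symm
    have hbase : ⁅x, a⁆ ^ (e * m) ∈ (⊤ : Subgroup K).lowerCentralSeries (n+1) :=
      pow_mem (comm_mem_succ hx a) _
    have hsame : List.Forall₂ (fun u v => ∃ ε ∈ (⊤ : Subgroup K).lowerCentralSeries 1, v = u * ε)
        (List.zipWith (fun a m => a ^ m) l ms') (List.zipWith (fun a m => a ^ m) l ms') :=
      List.forall₂_same.mpr (fun z _ => ⟨1, one_mem _, (mul_one z).symm⟩)
    obtain ⟨δ₂, hδ₂m, hδ₂e⟩ := itc_mod hsame (n+1) (⁅x, a⁆ ^ (e * m)) ⁅x ^ e, a ^ m⁆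
      hbase ⟨(⁅x, a⁆ ^ (e * m))⁻¹ * ⁅x ^ e, a ^ m⁆, hδ₁, by group⟩
    obtain ⟨δ₃, hδ₃m, hδ₃e⟩ := ihl ms' hlen' (n+1) ⁅x, a⁆ (comm_mem_succ hx a) (e * m)
    have hzl : (List.zipWith (fun a m => a ^ m) l ms').length = l.length := by
      simp [hlen']
    refine ⟨δ₃ * δ₂, ?_, ?_⟩
    · have h1 : n + 1 + (List.zipWith (fun a m => a ^ m) l ms').length + 1
          = n + (a :: l).length + 1 := by simp [hzl]; omega
      have h2 : n + 1 + l.length + 1 = n + (a :: l).length + 1 := by simp; omega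
      rw [h1] at hδ₂m
      rw [h2] at hδ₃m
      exact mul_mem hδ₃m hδ₂m
    · show itc (x ^ e) ((a ^ m) :: List.zipWith (fun a m => a ^ m) l ms')
          = itc x (a :: l) ^ (e * (m :: ms').prod) * (δ₃ * δ₂)
      rw [itc_cons, hδ₂e, hδ₃e, itc_cons]
      have : e * (m :: ms').prod = e * m * ms'.prod := by
        simp [List.prod_cons, mul_assoc]
      rw [this, mul_assoc]

lemma prod_ofFn_eq_single {M : Type*} [Monoid M] :
    ∀ {n : ℕ} (f : Fin n → M) (i : Fin n), (∀ j, j ≠ i → f j = 1) →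
      (List.ofFn f).prod = f i := by
  intro n
  induction n with
  | zero => exact fun f i _ => i.elim0
  | succ n ih =>
    intro f i hf
    rw [List.ofFn_succ, List.prod_cons]
    cases i using Fin.cases with
    | zero =>
      have htail : (List.ofFn fun j : Fin n => f j.succ).prod = 1 := by
        apply List.prod_eq_one
        intro a ha
        obtain ⟨j, rfl⟩ := List.mem_ofFn.mp ha
        exact hf j.succ (Fin.succ_ne_zero j)
      rw [htail, mul_one]
    | succ i' =>
      have h0 : f 0 = 1 := hf 0 (Fin.succ_ne_zero i').symm
      have := ih (fun j => f j.succ) i' (fun j hj => hf j.succ (by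
        intro hc
        exact hj (Fin.succ_injective n hc)))
      rw [h0, one_mul, this]

lemma prod_map_pow (r : ℕ) : ∀ (le : List ℕ), (le.map (fun e => r ^ e)).prod = r ^ le.sum := by
  intro le
  induction le with
  | nil => simp
  | cons a le ih => simp [ih, pow_add]

end Stmt9Aux

open Stmt9Aux Subgroup Pointwise

/-- Let `G` be an `s`-step nilpotent group (so `G_{s+1} = 1` where
`G_i = (⊤ : Subgroup G).lowerCentralSeries (i-1)` in Mathlib's indexing) and `H ≤ G × G`.
Suppose there are distinct positive integers `p ≠ q` and normal subgroups
`G¹,…,G^d` of `G` with `G = G¹⋯G^d` and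
`{(g₁^p⋯g_d^{p^d}, g₁^q⋯g_d^{q^d}) : gᵢ ∈ Gⁱ} ⊆ H·(G₂×G₂)`.
Then `{g ∈ G_s : (g^{p^j}, g^{q^j}) ∈ H for some j ≥ 1}` generates `G_s`. -/
theorem stmt_9 {G : Type*} [Group G] (s : ℕ) (hs : 1 ≤ s)
    (hnil : (⊤ : Subgroup G).lowerCentralSeries s = ⊥)
    (H : Subgroup (G × G)) (p q d : ℕ) (hp : 0 < p) (hq : 0 < q) (hpq : p ≠ q)
    (hd : 1 ≤ d) (Gs : Fin d → Subgroup G) (hnorm : ∀ i, (Gs i).Normal)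
    (hgen : ∀ g : G, ∃ c : Fin d → G, (∀ i, c i ∈ Gs i) ∧ g = (List.ofFn c).prod)
    (hH : ∀ c : Fin d → G, (∀ i, c i ∈ Gs i) →
        ∃ h : G × G, h ∈ H ∧ ∃ u ∈ (⊤ : Subgroup G).lowerCentralSeries 1, ∃ v ∈ (⊤ : Subgroup G).lowerCentralSeries 1,
          ((List.ofFn fun i => c i ^ p ^ (i.val + 1)).prod,
           (List.ofFn fun i => c i ^ q ^ (i.val + 1)).prod) = h * (u, v)) :
    Subgroup.closure
        {g : G | g ∈ (⊤ : Subgroup G).lowerCentralSeries (s - 1) ∧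
          ∃ j : ℕ, 1 ≤ j ∧ (g ^ p ^ j, g ^ q ^ j) ∈ H}
      = (⊤ : Subgroup G).lowerCentralSeries (s - 1) := by
  classical
  -- the sets of iterated commutators of elements from the `Gs i`
  set W : ℕ → Set G := fun k => {g | ∃ (x : G) (l : List G), (∃ i, x ∈ Gs i) ∧
    (∀ y ∈ l, ∃ i, y ∈ Gs i) ∧ l.length = k ∧ g = itc x l} with hWdef
  have hWsub : ∀ k, W k ⊆ ↑((⊤ : Subgroup G).lowerCentralSeries k) := by
    rintro k g ⟨x, l, hx, hl, hlen, rfl⟩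
    have := itc_mem_lcs 0 x (mem_top x) l
    simpa [hlen] using this
  have hWcl : ∀ k, closure (W k) ≤ (⊤ : Subgroup G).lowerCentralSeries k :=
    fun k => (closure_le _).mpr (hWsub k)
  -- main generation claim
  have claim : ∀ k, (⊤ : Subgroup G).lowerCentralSeries k ≤
      closure (W k) ⊔ (⊤ : Subgroup G).lowerCentralSeries (k+1) := by
    intro k
    induction k with
    | zero =>
      intro g _
      obtain ⟨c, hc, rfl⟩ := hgen g
      have hmem : (List.ofFn c).prod ∈ closure (W 0) := by
        apply list_prod_mem
        intro y hy
        obtain ⟨i, rfl⟩ := List.mem_ofFn.mp hy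
        exact subset_closure ⟨c i, [], ⟨i, hc i⟩, by simp, rfl, rfl⟩
      exact Subgroup.mem_sup_left hmem
    | succ k ih =>
      have hdef : (⊤ : Subgroup G).lowerCentralSeries (k+1) = ⁅(⊤ : Subgroup G).lowerCentralSeries k, (⊤ : Subgroup G)⁆ := rfl
      rw [hdef, commutator_le]
      intro x hx y _
      set M' := closure (W (k+1)) ⊔ (⊤ : Subgroup G).lowerCentralSeries (k+2) with hM'
      set N := (⊤ : Subgroup G).lowerCentralSeries (k+2) with hNdef
      have hNle : N ≤ M' := le_sup_right
      have hmem_of : ∀ g : G, ((g : G ⧸ N) ∈ M'.map (QuotientGroup.mk' N)) → g ∈ M' := by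
        intro g hg
        obtain ⟨w, hw, hwg⟩ := hg
        have h1 : w⁻¹ * g ∈ N := QuotientGroup.eq.mp hwg
        have h2 : g = w * (w⁻¹ * g) := by group
        rw [h2]
        exact mul_mem hw (hNle h1)
      have hx' : x ∈ (closure (W k) : Set G) * ((⊤ : Subgroup G).lowerCentralSeries (k+1) : Set G) := by
        rw [← Subgroup.mul_normal]
        exact ih hx
      obtain ⟨w, hw, z, hz, rfl⟩ := hx'
      have hwz : (↑⁅w * z, y⁆ : G ⧸ N) = ↑⁅w, y⁆ := by
        have hid : ⁅w * z, y⁆ = (w * ⁅z, y⁆ * w⁻¹) * ⁅w, y⁆ := by group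
        have h1 : w * ⁅z, y⁆ * w⁻¹ ∈ N :=
          (Subgroup.lowerCentralSeries_normal ⊤ (k+2)).conj_mem _ (comm_mem_succ hz y) w
        rw [hid, QuotientGroup.mk_mul, mk_one_of_mem h1, one_mul]
      have main : ∀ u, u ∈ closure (W k) → ∀ y : G,
          (↑⁅u, y⁆ : G ⧸ N) ∈ M'.map (QuotientGroup.mk' N) := by
        intro u hu
        induction hu using closure_induction with
        | mem v hv =>
          intro y'
          obtain ⟨c, hc, rfl⟩ := hgen y'
          have hvk : v ∈ (⊤ : Subgroup G).lowerCentralSeries k := hWsub k hv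
          have haux : ∀ L : List G, (∀ a ∈ L, ∃ i, a ∈ Gs i) →
              (↑⁅v, L.prod⁆ : G ⧸ N) ∈ M'.map (QuotientGroup.mk' N) := by
            intro L
            induction L with
            | nil =>
              intro _
              simp only [List.prod_nil]
              have : ⁅v, (1:G)⁆ = 1 := by group
              rw [this]
              simpa using one_mem (M'.map (QuotientGroup.mk' N))
            | cons a L ihL =>
              intro hmem
              rw [List.prod_cons, comm_mul_right_mod k v a L.prod hvk]
              refine mul_mem ?_ (ihL fun b hb => hmem b (List.mem_cons_of_mem a hb))
              obtain ⟨i, hai⟩ := hmem a (by simp)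
              obtain ⟨x₀, l₀, hx₀, hl₀, hlen₀, rfl⟩ := hv
              have he : ⁅itc x₀ l₀, a⁆ = itc x₀ (l₀ ++ [a]) := (itc_append_singleton _ _ _).symm
              have hmemW : ⁅itc x₀ l₀, a⁆ ∈ W (k+1) := by
                refine ⟨x₀, l₀ ++ [a], hx₀, ?_, by simp [hlen₀], he⟩
                intro b hb
                rcases List.mem_append.mp hb with h | h
                · exact hl₀ b h
                · simp only [List.mem_singleton] at h
                  subst h
                  exact ⟨i, hai⟩
              have : ⁅itc x₀ l₀, a⁆ ∈ M' := Subgroup.mem_sup_left (subset_closure hmemW)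
              exact ⟨_, this, rfl⟩
          exact haux (List.ofFn c) (by
            intro a ha
            obtain ⟨i, rfl⟩ := List.mem_ofFn.mp ha
            exact ⟨i, hc i⟩)
        | one =>
          intro y'
          have : ⁅(1:G), y'⁆ = 1 := by group
          rw [this]
          simpa using one_mem (M'.map (QuotientGroup.mk' N))
        | mul u₁ u₂ hu₁ hu₂ ih₁ ih₂ =>
          intro y'
          rw [comm_mul_left_mod k u₁ u₂ y' (hWcl k hu₁) (hWcl k hu₂)]
          exact mul_mem (ih₁ y') (ih₂ y')
        | inv u₁ hu₁ ih₁ =>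
          intro y'
          rw [comm_inv_left_mod k u₁ y' (hWcl k hu₁)]
          exact inv_mem (ih₁ y')
      apply hmem_of
      rw [hwz]
      exact main w hw y
  -- the single-element consequence of the hypothesis `hH`
  have hsingle : ∀ (i : Fin d) (a : G), a ∈ Gs i → ∃ h ∈ H,
      ∃ ε ∈ (⊤ : Subgroup (G × G)).lowerCentralSeries 1,
        ((a ^ p ^ (i.1+1), a ^ q ^ (i.1+1)) : G × G) = h * ε := by
    intro i a ha
    set c : Fin d → G := fun i' => if i' = i then a else 1 with hc
    have hcm : ∀ i', c i' ∈ Gs i' := by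
      intro i'
      by_cases h : i' = i
      · subst h; simp [hc, ha]
      · simp [hc, h, one_mem]
    obtain ⟨h, hHh, u, hu, v, hv, heq⟩ := hH c hcm
    have h1 : (List.ofFn fun i' => c i' ^ p ^ (i'.val + 1)).prod = a ^ p ^ (i.1+1) := by
      rw [prod_ofFn_eq_single _ i (by
        intro j hj
        simp [hc, hj, one_pow])]
      simp [hc]
    have h2 : (List.ofFn fun i' => c i' ^ q ^ (i'.val + 1)).prod = a ^ q ^ (i.1+1) := by
      rw [prod_ofFn_eq_single _ i (by
        intro j hj
        simp [hc, hj, one_pow])]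
      simp [hc]
    refine ⟨h, hHh, (u, v), ?_, ?_⟩
    · rw [Subgroup.top_lowerCentralSeries_prod]
      exact ⟨hu, hv⟩
    · rw [← h1, ← h2]
      exact heq
  -- build the data lists for a list of generators
  have hlists : ∀ l : List G, (∀ y ∈ l, ∃ i, y ∈ Gs i) →
      ∃ (le : List ℕ) (lh : List (G × G)), le.length = l.length ∧
        (∀ h' ∈ lh, h' ∈ H) ∧ (∀ e ∈ le, 1 ≤ e) ∧
        List.Forall₂ (fun a b => ∃ ε ∈ (⊤ : Subgroup (G × G)).lowerCentralSeries 1, b = a * ε) lh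
          (List.zipWith (fun y e => ((y ^ p ^ e, y ^ q ^ e) : G × G)) l le) := by
    intro l
    induction l with
    | nil => exact fun _ => ⟨[], [], rfl, by simp, by simp, List.Forall₂.nil⟩
    | cons y l ihl =>
      intro hmem
      obtain ⟨i, hyi⟩ := hmem y (by simp)
      obtain ⟨h, hh, ε, hε, heq⟩ := hsingle i y hyi
      obtain ⟨le, lh, h1, h2, h3, h4⟩ := ihl (fun b hb => hmem b (List.mem_cons_of_mem _ hb))
      refine ⟨(i.1+1) :: le, h :: lh, by simp [h1], ?_, ?_, ?_⟩
      · intro h' hh'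
        rcases List.mem_cons.mp hh' with h' | h'
        · subst h'; exact hh
        · exact h2 _ h'
      · intro e he
        rcases List.mem_cons.mp he with h' | h'
        · omega
        · exact h3 _ h'
      · rw [List.zipWith_cons_cons]
        exact List.Forall₂.cons ⟨ε, hε, heq⟩ h4
  -- W (s-1) is contained in the generating set of the statement
  have hWU : W (s-1) ⊆ {g : G | g ∈ (⊤ : Subgroup G).lowerCentralSeries (s - 1) ∧
      ∃ j : ℕ, 1 ≤ j ∧ (g ^ p ^ j, g ^ q ^ j) ∈ H} := by
    rintro g ⟨x, l, ⟨i₀, hx0⟩, hl, hlen, rfl⟩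
    constructor
    · have := itc_mem_lcs 0 x (mem_top x) l
      simpa [hlen] using this
    · obtain ⟨le, lh, hlen1, hlh, hle1, hF⟩ := hlists l hl
      obtain ⟨h₀, hh₀, ε₀, hε₀, heq₀⟩ := hsingle i₀ x hx0
      set zipL := List.zipWith (fun y e => ((y ^ p ^ e, y ^ q ^ e) : G × G)) l le with hzipdef
      have hKnil : (⊤ : Subgroup (G × G)).lowerCentralSeries s = ⊥ := by
        rw [Subgroup.top_lowerCentralSeries_prod, hnil, bot_prod_bot]
      obtain ⟨δ', hδ'm, hδ'e⟩ := itc_mod hF 0 h₀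
        ((x ^ p ^ (i₀.1+1), x ^ q ^ (i₀.1+1)) : G × G) (mem_top _)
        ⟨ε₀, by simpa using hε₀, heq₀⟩
      have hlhlen : lh.length = l.length := by
        have hl1 := hF.length_eq
        rw [hl1]
        simp [hzipdef, hlen1]
      have harith : (0 : ℕ) + lh.length + 1 = s := by rw [hlhlen, hlen]; omega
      rw [harith, hKnil] at hδ'm
      have hδ'1 : δ' = 1 := by simpa using hδ'm
      rw [hδ'1, mul_one] at hδ'e
      have hZH : itc ((x ^ p ^ (i₀.1+1), x ^ q ^ (i₀.1+1)) : G × G) zipL ∈ H := by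
        rw [hδ'e]
        exact itc_mem_subgroup H h₀ hh₀ lh hlh
      set j := (i₀.1+1) + le.sum with hjdef
      -- component computation
      have hcomp : ∀ r : ℕ, 0 < r → ∀ (f : (G × G) →* G),
          (f (x ^ r ^ (i₀.1+1), x ^ r ^ (i₀.1+1))) = x ^ r ^ (i₀.1+1) → True := fun _ _ _ _ => trivial
      have hmaplen : (le.map (fun e => p ^ e)).length = l.length := by simp [hlen1]
      have hmaplenq : (le.map (fun e => q ^ e)).length = l.length := by simp [hlen1]
      obtain ⟨δp, hδpm, hδpe⟩ := itc_pow l (le.map (fun e => p ^ e)) hmaplen 0 x (mem_top x)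
        (p ^ (i₀.1+1))
      obtain ⟨δq, hδqm, hδqe⟩ := itc_pow l (le.map (fun e => q ^ e)) hmaplenq 0 x (mem_top x)
        (q ^ (i₀.1+1))
      have harith2 : (0 : ℕ) + l.length + 1 = s := by rw [hlen]; omega
      rw [harith2, hnil] at hδpm hδqm
      have hδp1 : δp = 1 := by simpa using hδpm
      have hδq1 : δq = 1 := by simpa using hδqm
      rw [hδp1, mul_one] at hδpe
      rw [hδq1, mul_one] at hδqe
      have hexp_p : p ^ (i₀.1+1) * (le.map (fun e => p ^ e)).prod = p ^ j := by
        rw [prod_map_pow, ← pow_add]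
      have hexp_q : q ^ (i₀.1+1) * (le.map (fun e => q ^ e)).prod = q ^ j := by
        rw [prod_map_pow, ← pow_add]
      have hzip_p : List.zipWith (fun a m => a ^ m) l (le.map (fun e => p ^ e))
          = List.map Prod.fst zipL := by
        rw [List.zipWith_map_right, hzipdef, List.map_zipWith]
      have hzip_q : List.zipWith (fun a m => a ^ m) l (le.map (fun e => q ^ e))
          = List.map Prod.snd zipL := by
        rw [List.zipWith_map_right, hzipdef, List.map_zipWith]
      have hfst : (itc ((x ^ p ^ (i₀.1+1), x ^ q ^ (i₀.1+1)) : G × G) zipL).1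
          = (itc x l) ^ p ^ j := by
        have hm := itc_map (MonoidHom.fst G G)
          ((x ^ p ^ (i₀.1+1), x ^ q ^ (i₀.1+1)) : G × G) zipL
        have hml : List.map (⇑(MonoidHom.fst G G)) zipL = List.map Prod.fst zipL := rfl
        rw [hml] at hm
        have : (itc ((x ^ p ^ (i₀.1+1), x ^ q ^ (i₀.1+1)) : G × G) zipL).1
            = itc (x ^ p ^ (i₀.1+1)) (List.map Prod.fst zipL) := hm
        rw [this, ← hzip_p, hδpe, hexp_p]
      have hsnd : (itc ((x ^ p ^ (i₀.1+1), x ^ q ^ (i₀.1+1)) : G × G) zipL).2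
          = (itc x l) ^ q ^ j := by
        have hm := itc_map (MonoidHom.snd G G)
          ((x ^ p ^ (i₀.1+1), x ^ q ^ (i₀.1+1)) : G × G) zipL
        have hml : List.map (⇑(MonoidHom.snd G G)) zipL = List.map Prod.snd zipL := rfl
        rw [hml] at hm
        have : (itc ((x ^ p ^ (i₀.1+1), x ^ q ^ (i₀.1+1)) : G × G) zipL).2
            = itc (x ^ q ^ (i₀.1+1)) (List.map Prod.snd zipL) := hm
        rw [this, ← hzip_q, hδqe, hexp_q]
      refine ⟨j, by omega, ?_⟩
      have hpair : ((itc x l ^ p ^ j, itc x l ^ q ^ j) : G × G)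
          = itc ((x ^ p ^ (i₀.1+1), x ^ q ^ (i₀.1+1)) : G × G) zipL := by
        rw [← hfst, ← hsnd]
      rw [hpair]
      exact hZH
  -- assemble
  apply le_antisymm
  · exact (closure_le _).mpr (fun g hg => hg.1)
  · have h := claim (s-1)
    have hs1 : s - 1 + 1 = s := Nat.succ_pred_eq_of_pos hs
    rw [hs1, hnil, sup_bot_eq] at h
    exact h.trans (closure_mono hWU)
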